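/- arXiv:2411.03413 — 4 statements merged into one kernel-verified Lean document; each statement's English description precedes it below -/
import Mathlib

section
/- For the elementary symmetric polynomial constraint: if p_1,...,p_n ≥ 0 with sum equal to 1, then ℓ! · Σ_{1 ≤ x_1 < x_2 < ... < x_ℓ ≤ n} Π_{i=1}^ℓ p_{x_i} ≤ exp(-ℓ(ℓ-1)/(2n)). -/
open Finset

namespace EsymmBirthday

variable {n : ℕ}

noncomputable def E (p : Fin n → ℝ) (k : ℕ) (s : Finset (Fin n)) : ℝ :=
  ∑ t ∈ s.powersetCard k, ∏ i ∈ t, p i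

lemma E_zero (p : Fin n → ℝ) (s : Finset (Fin n)) : E p 0 s = 1 := by simp [E]

lemma E_nonneg {p : Fin n → ℝ} (hp : ∀ i, 0 ≤ p i) (k : ℕ) (s : Finset (Fin n)) :
    0 ≤ E p k s :=
  Finset.sum_nonneg fun t _ => Finset.prod_nonneg fun i _ => hp i

lemma E_insert (p : Fin n → ℝ) {a : Fin n} {s : Finset (Fin n)} (ha : a ∉ s) (k : ℕ) :
    E p (k + 1) (insert a s) = E p (k + 1) s + p a * E p k s := by
  unfold E
  rw [powersetCard_succ_insert ha, sum_union, sum_image, mul_sum]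
  · congr 1
    refine sum_congr rfl fun t ht => ?_
    rw [prod_insert fun hat => ha ((mem_powersetCard.mp ht).1 hat)]
  · intro t1 h1 t2 h2 h
    have ha1 : a ∉ t1 := fun h' => ha ((mem_powersetCard.mp h1).1 h')
    have ha2 : a ∉ t2 := fun h' => ha ((mem_powersetCard.mp h2).1 h')
    rw [← erase_insert ha1, ← erase_insert ha2, h]
  · rw [disjoint_right]
    intro t ht ht'
    obtain ⟨u, _, rfl⟩ := mem_image.mp ht
    exact (fun h' => ha ((mem_powersetCard.mp ht').1 h')) (mem_insert_self a u)

lemma E_A (p : Fin n → ℝ) (s : Finset (Fin n)) :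
    ∀ k : ℕ, ((k : ℝ) + 1) * E p (k + 1) s = ∑ i ∈ s, p i * E p k (s.erase i) := by
  induction s using Finset.induction_on with
  | empty => intro k; rw [E, powersetCard_eq_empty.mpr (by simp)]; simp
  | @insert a s ha ih =>
    intro k
    have herase : ∀ i ∈ s, (insert a s).erase i = insert a (s.erase i) := by
      intro i hi
      exact erase_insert_of_ne (fun h => ha (h ▸ hi))
    rw [sum_insert ha, erase_insert ha]
    cases k with
    | zero =>
      have : ∑ i ∈ s, p i * E p 0 ((insert a s).erase i) = ∑ i ∈ s, p i * E p 0 (s.erase i) := by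
        refine sum_congr rfl fun i hi => by rw [E_zero, E_zero]
      rw [this, ← ih 0, E_insert p ha 0, E_zero]
      ring
    | succ m =>
      have : ∑ i ∈ s, p i * E p (m + 1) ((insert a s).erase i)
          = ∑ i ∈ s, (p i * E p (m + 1) (s.erase i) + p a * (p i * E p m (s.erase i))) := by
        refine sum_congr rfl fun i hi => ?_
        rw [herase i hi, E_insert p (fun h => ha (mem_of_mem_erase h)) m]
        ring
      rw [this, sum_add_distrib, ← ih (m + 1), ← mul_sum, ← ih m,
        E_insert p ha (m + 1)]
      push_cast
      ring

lemma E_pair (p : Fin n → ℝ) {i j : Fin n} (hij : i ≠ j) (k : ℕ) :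
    p i * E p k (univ.erase i) - p j * E p k (univ.erase j)
      = (p i - p j) * E p k ((univ.erase i).erase j) := by
  cases k with
  | zero => rw [E_zero, E_zero, E_zero]; ring
  | succ m =>
    set s := (univ.erase i).erase j with hs
    have hjs : j ∉ s := notMem_erase _ _
    have his : i ∉ s := fun h => (notMem_erase i _) (mem_of_mem_erase h)
    have h1 : univ.erase i = insert j s := by
      rw [hs, insert_erase (mem_erase.mpr ⟨hij.symm, mem_univ j⟩)]
    have h2 : univ.erase j = insert i ((univ.erase j).erase i) := by
      rw [insert_erase (mem_erase.mpr ⟨hij, mem_univ i⟩)]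
    have h3 : (univ.erase j).erase i = s := by rw [hs, erase_right_comm]
    rw [h1, h2, h3, E_insert p hjs m, E_insert p his m]
    ring


lemma E_eq_zero (p : Fin n → ℝ) {k : ℕ} {s : Finset (Fin n)} (h : s.card < k) :
    E p k s = 0 := by
  rw [E, powersetCard_eq_empty.mpr h, sum_empty]

lemma corr (p : Fin n → ℝ) (hp : ∀ i, 0 ≤ p i) (hsum : ∑ i, p i = 1) (k : ℕ) :
    ∑ i, p i * E p k (univ.erase i) ≤ (n : ℝ) * ∑ i, p i ^ 2 * E p k (univ.erase i) := by
  set q : Fin n → ℝ := fun i => E p k (univ.erase i) with hq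
  have h0 : 0 ≤ ∑ i : Fin n, ∑ j : Fin n, (p i - p j) * (p i * q i - p j * q j) := by
    refine Finset.sum_nonneg fun i _ => Finset.sum_nonneg fun j _ => ?_
    by_cases h : i = j
    · subst h; simp
    · have hpair : p i * q i - p j * q j = (p i - p j) * E p k ((univ.erase i).erase j) := by
        rw [hq]; exact E_pair p h k
      rw [hpair, ← mul_assoc, ← sq]
      exact mul_nonneg (sq_nonneg _) (E_nonneg hp _ _)
  have h1 : (n : ℝ) * ∑ i, p i ^ 2 * q i = ∑ i : Fin n, ∑ _j : Fin n, p i ^ 2 * q i := by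
    simp only [Finset.sum_const, Finset.card_univ, Fintype.card_fin, nsmul_eq_mul]
    rw [← Finset.mul_sum]
  have h2 : (n : ℝ) * ∑ i, p i ^ 2 * q i = ∑ _i : Fin n, ∑ j : Fin n, p j ^ 2 * q j := by
    rw [h1, Finset.sum_comm]
  have h3 : (∑ i, p i) * (∑ i, p i * q i)
      = ∑ i : Fin n, ∑ j : Fin n, p i * (p j * q j) := by
    rw [Finset.sum_mul_sum]
  have h4 : (∑ i, p i) * (∑ i, p i * q i)
      = ∑ i : Fin n, ∑ j : Fin n, p j * (p i * q i) := by
    rw [h3, Finset.sum_comm]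
  have expand : ∑ i : Fin n, ∑ j : Fin n, (p i - p j) * (p i * q i - p j * q j)
      = 2 * ((n : ℝ) * ∑ i, p i ^ 2 * q i) - 2 * ((∑ i, p i) * (∑ i, p i * q i)) := by
    have hterm : ∀ i j : Fin n, (p i - p j) * (p i * q i - p j * q j)
        = (p i ^ 2 * q i + p j ^ 2 * q j) - (p i * (p j * q j) + p j * (p i * q i)) := by
      intro i j; ring
    calc ∑ i : Fin n, ∑ j : Fin n, (p i - p j) * (p i * q i - p j * q j)
        = ∑ i : Fin n, ∑ j : Fin n,
            ((p i ^ 2 * q i + p j ^ 2 * q j) - (p i * (p j * q j) + p j * (p i * q i))) := by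
          exact Finset.sum_congr rfl fun i _ => Finset.sum_congr rfl fun j _ => hterm i j
      _ = ((∑ i : Fin n, ∑ _j : Fin n, p i ^ 2 * q i)
            + ∑ _i : Fin n, ∑ j : Fin n, p j ^ 2 * q j)
          - ((∑ i : Fin n, ∑ j : Fin n, p i * (p j * q j))
            + ∑ i : Fin n, ∑ j : Fin n, p j * (p i * q i)) := by
          simp only [Finset.sum_sub_distrib, Finset.sum_add_distrib]
      _ = 2 * ((n : ℝ) * ∑ i, p i ^ 2 * q i) - 2 * ((∑ i, p i) * (∑ i, p i * q i)) := by
          rw [← h1, ← h2, ← h3, ← h4]; ring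
  rw [expand, hsum] at h0
  linarith

lemma E_one (p : Fin n → ℝ) : E p 1 univ = ∑ i, p i := by
  have h := E_A p univ 0
  simp only [E_zero, mul_one, Nat.cast_zero, zero_add, one_mul] at h
  exact h

lemma step (p : Fin n → ℝ) (hn : 0 < n) (hp : ∀ i, 0 ≤ p i) (hsum : ∑ i, p i = 1) (k : ℕ) :
    ((k : ℝ) + 1 + 1) * E p (k + 1 + 1) univ
      ≤ (1 - ((k : ℝ) + 1) / n) * E p (k + 1) univ := by
  have hn' : (0 : ℝ) < n := by exact_mod_cast hn
  have hA : ((k : ℝ) + 1 + 1) * E p (k + 1 + 1) univ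
      = ∑ i, p i * E p (k + 1) (univ.erase i) := by
    have := E_A p univ (k + 1)
    push_cast at this
    convert this using 2
  have hins : ∀ i : Fin n,
      E p (k + 1) (univ.erase i) = E p (k + 1) univ - p i * E p k (univ.erase i) := by
    intro i
    have h := E_insert p (notMem_erase i univ) k
    rw [insert_erase (mem_univ i)] at h
    linarith
  have hA' : ((k : ℝ) + 1) * E p (k + 1) univ = ∑ i, p i * E p k (univ.erase i) :=
    E_A p univ k
  have hc := corr p hp hsum k
  have hsplit : ∑ i, p i * E p (k + 1) (univ.erase i)
      = E p (k + 1) univ - ∑ i, p i ^ 2 * E p k (univ.erase i) := by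
    calc ∑ i, p i * E p (k + 1) (univ.erase i)
        = ∑ i, (p i * E p (k + 1) univ - p i ^ 2 * E p k (univ.erase i)) := by
          refine Finset.sum_congr rfl fun i _ => ?_
          rw [hins i]; ring
      _ = (∑ i, p i) * E p (k + 1) univ - ∑ i, p i ^ 2 * E p k (univ.erase i) := by
          rw [Finset.sum_sub_distrib, Finset.sum_mul]
      _ = E p (k + 1) univ - ∑ i, p i ^ 2 * E p k (univ.erase i) := by rw [hsum, one_mul]
  rw [hA, hsplit]
  have hle : ((k : ℝ) + 1) / n * E p (k + 1) univ ≤ ∑ i, p i ^ 2 * E p k (univ.erase i) := by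
    rw [div_mul_eq_mul_div, div_le_iff₀ hn', hA']
    calc ∑ i, p i * E p k (univ.erase i)
        ≤ (n : ℝ) * ∑ i, p i ^ 2 * E p k (univ.erase i) := hc
      _ = (∑ i, p i ^ 2 * E p k (univ.erase i)) * n := by ring
  nlinarith [hle]

lemma gauss_sum (ℓ : ℕ) : (∑ i ∈ Finset.range ℓ, (i : ℝ)) * 2 = (ℓ : ℝ) * ((ℓ : ℝ) - 1) := by
  induction ℓ with
  | zero => simp
  | succ m ih =>
    rw [Finset.sum_range_succ]
    push_cast
    push_cast at ih
    linarith

lemma F_bound (p : Fin n → ℝ) (hn : 0 < n) (hp : ∀ i, 0 ≤ p i) (hsum : ∑ i, p i = 1) :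
    ∀ ℓ : ℕ, (ℓ.factorial : ℝ) * E p ℓ univ ≤ ∏ i ∈ Finset.range ℓ, (1 - (i : ℝ) / n) := by
  have hn' : (0 : ℝ) < n := by exact_mod_cast hn
  intro ℓ
  induction ℓ with
  | zero => simp [E_zero]
  | succ m ih =>
    rcases le_or_gt m n with hm | hm
    · have hfac : (0 : ℝ) ≤ 1 - (m : ℝ) / n := by
        rw [sub_nonneg, div_le_one hn']
        exact_mod_cast hm
      have hstep : ((m : ℝ) + 1) * E p (m + 1) univ ≤ (1 - (m : ℝ) / n) * E p m univ := by
        cases m with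
        | zero => simp [E_zero, E_one, hsum]
        | succ k =>
          have h := step p hn hp hsum k
          push_cast
          convert h using 2
      calc ((m + 1).factorial : ℝ) * E p (m + 1) univ
          = (m.factorial : ℝ) * (((m : ℝ) + 1) * E p (m + 1) univ) := by
            rw [Nat.factorial_succ]; push_cast; ring
        _ ≤ (m.factorial : ℝ) * ((1 - (m : ℝ) / n) * E p m univ) := by
            exact mul_le_mul_of_nonneg_left hstep (by positivity)
        _ = (1 - (m : ℝ) / n) * ((m.factorial : ℝ) * E p m univ) := by ring
        _ ≤ (1 - (m : ℝ) / n) * ∏ i ∈ Finset.range m, (1 - (i : ℝ) / n) :=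
            mul_le_mul_of_nonneg_left ih hfac
        _ = ∏ i ∈ Finset.range (m + 1), (1 - (i : ℝ) / n) := by
            rw [Finset.prod_range_succ]; ring
    · have hE : E p (m + 1) univ = 0 := by
        refine E_eq_zero p ?_
        rw [card_univ, Fintype.card_fin]
        omega
      have hP : ∏ i ∈ Finset.range (m + 1), (1 - (i : ℝ) / n) = 0 := by
        refine Finset.prod_eq_zero (Finset.mem_range.mpr (by omega : n < m + 1)) ?_
        rw [div_self (ne_of_gt hn'), sub_self]
      rw [hE, hP, mul_zero]

end EsymmBirthday

/-- Bound on the elementary symmetric polynomial of a probability vector: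
if `p₁, ..., pₙ ≥ 0` sum to `1`, then
`ℓ! · Σ_{x₁ < ⋯ < x_ℓ} Π p_{xᵢ} ≤ exp (-ℓ(ℓ-1)/(2n))`. -/
theorem esymm_birthday_bound (n ℓ : ℕ) (p : Fin n → ℝ)
    (hp : ∀ i, 0 ≤ p i) (hsum : ∑ i, p i = 1) :
    (ℓ.factorial : ℝ) * ∑ s ∈ Finset.powersetCard ℓ (Finset.univ : Finset (Fin n)),
        ∏ i ∈ s, p i
      ≤ Real.exp (-((ℓ : ℝ) * ((ℓ : ℝ) - 1)) / (2 * n)) := by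
  rcases Nat.eq_zero_or_pos n with hn | hn
  · subst hn
    simp at hsum
  have hn' : (0 : ℝ) < n := by exact_mod_cast hn
  have hLHS : (∑ s ∈ Finset.powersetCard ℓ (Finset.univ : Finset (Fin n)), ∏ i ∈ s, p i)
      = EsymmBirthday.E p ℓ Finset.univ := rfl
  rw [hLHS]
  rcases le_or_gt ℓ n with hl | hl
  · have h1 := EsymmBirthday.F_bound p hn hp hsum ℓ
    have h2 : ∏ i ∈ Finset.range ℓ, (1 - (i : ℝ) / n)
        ≤ ∏ i ∈ Finset.range ℓ, Real.exp (-(i : ℝ) / n) := by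
      refine Finset.prod_le_prod (fun i hi => ?_) (fun i hi => ?_)
      · rw [sub_nonneg, div_le_one hn']
        have : i < ℓ := Finset.mem_range.mp hi
        exact_mod_cast le_trans (le_of_lt this) hl
      · rw [neg_div]
        have := Real.add_one_le_exp (-((i : ℝ) / n))
        linarith
    have h3 : ∏ i ∈ Finset.range ℓ, Real.exp (-(i : ℝ) / n)
        = Real.exp (∑ i ∈ Finset.range ℓ, -(i : ℝ) / n) := (Real.exp_sum _ _).symm
    have hgauss := EsymmBirthday.gauss_sum ℓ
    have h4 : (∑ i ∈ Finset.range ℓ, -(i : ℝ) / n)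
        = -((ℓ : ℝ) * ((ℓ : ℝ) - 1)) / (2 * n) := by
      rw [show (∑ i ∈ Finset.range ℓ, -(i : ℝ) / n)
          = -(∑ i ∈ Finset.range ℓ, (i : ℝ)) / n by
        rw [← Finset.sum_div, ← Finset.sum_neg_distrib]]
      field_simp
      linear_combination (-1 : ℝ) * hgauss
    calc (ℓ.factorial : ℝ) * EsymmBirthday.E p ℓ Finset.univ
        ≤ ∏ i ∈ Finset.range ℓ, (1 - (i : ℝ) / n) := h1
      _ ≤ ∏ i ∈ Finset.range ℓ, Real.exp (-(i : ℝ) / n) := h2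
      _ = Real.exp (-((ℓ : ℝ) * ((ℓ : ℝ) - 1)) / (2 * n)) := by rw [h3, h4]
  · have hE : EsymmBirthday.E p ℓ Finset.univ = 0 := by
      refine EsymmBirthday.E_eq_zero p ?_
      rw [Finset.card_univ, Fintype.card_fin]
      exact hl
    rw [hE, mul_zero]
    exact le_of_lt (Real.exp_pos _)
end

section
/- Let K = P·Q be a composition of Markov kernels with stationary distribution μ, and suppose the one-step entropy conservation Ent^φ_μ[f] ≤ (1/κ)·E_{x∼μP}[Ent^φ_{Q(x,·)}[f]] holds for all f ≥ 0, where Q is the adjoint of P with respect to μ. Then Ent^φ_μ[K f] ≤ (1-κ)·Ent^φ_μ[f] for all f ≥ 0. -/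
open Finset

/-- Entropy decay for a composed kernel `K = P·Q` from one-step entropy conservation:
if `μ` is stationary for `K = P·Q`, `Q` is the adjoint of `P` with respect to `μ`, and
`Ent^φ_μ[f] ≤ (1/κ) · E_{y ∼ μP}[Ent^φ_{Q(y,·)}[f]]` for all `f ≥ 0`, then
`Ent^φ_μ[K f] ≤ (1-κ) · Ent^φ_μ[f]` for all `f ≥ 0`. -/
theorem phi_entropy_decay {X : Type*} [Fintype X]
    (φ : ℝ → ℝ) (hφ : ConvexOn ℝ Set.univ φ)
    (μ : X → ℝ) (hμ0 : ∀ x, 0 ≤ μ x) (hμ1 : ∑ x, μ x = 1)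
    (P Q : X → X → ℝ)
    (hP0 : ∀ x y, 0 ≤ P x y) (hP1 : ∀ x, ∑ y, P x y = 1)
    (hQ0 : ∀ y z, 0 ≤ Q y z) (hQ1 : ∀ y, ∑ z, Q y z = 1)
    (hadj : ∀ x y, μ x * P x y = (∑ z, μ z * P z y) * Q y x)
    (hstat : ∀ z, ∑ x, μ x * (∑ y, P x y * Q y z) = μ z)
    (κ : ℝ) (hκ0 : 0 < κ) (hκ1 : κ ≤ 1)
    (hcons : ∀ f : X → ℝ, (∀ x, 0 ≤ f x) →
      (∑ x, μ x * φ (f x)) - φ (∑ x, μ x * f x) ≤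
        (1 / κ) * ∑ y, (∑ z, μ z * P z y) *
          ((∑ x, Q y x * φ (f x)) - φ (∑ x, Q y x * f x)))
    (f : X → ℝ) (hf : ∀ x, 0 ≤ f x) :
    (∑ x, μ x * φ (∑ y, P x y * (∑ z, Q y z * f z)))
        - φ (∑ x, μ x * (∑ y, P x y * (∑ z, Q y z * f z)))
      ≤ (1 - κ) * ((∑ x, μ x * φ (f x)) - φ (∑ x, μ x * f x)) := by
  set g : X → ℝ := fun y => ∑ z, Q y z * f z with hg
  set ν : X → ℝ := fun y => ∑ z, μ z * P z y with hν
  -- marginal: ν ∘ Q = μ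
  have hmarg : ∀ x, ∑ y, ν y * Q y x = μ x := by
    intro x
    have : ∀ y, ν y * Q y x = μ x * P x y := fun y => (hadj x y).symm
    simp_rw [this, ← Finset.mul_sum, hP1, mul_one]
  -- swap lemma: ∑ x μ x ∑ y P x y * h y = ∑ y ν y * h y
  have swap : ∀ h : X → ℝ, ∑ x, μ x * ∑ y, P x y * h y = ∑ y, ν y * h y := by
    intro h
    simp_rw [Finset.mul_sum, ← mul_assoc]
    rw [Finset.sum_comm]
    exact Finset.sum_congr rfl fun y _ => by rw [hν, ← Finset.sum_mul]
  -- swap lemma 2: ∑ y ν y * ∑ x Q y x * h x = ∑ x μ x * h x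
  have swap2 : ∀ h : X → ℝ, ∑ y, ν y * ∑ x, Q y x * h x = ∑ x, μ x * h x := by
    intro h
    simp_rw [Finset.mul_sum, ← mul_assoc]
    rw [Finset.sum_comm]
    exact Finset.sum_congr rfl fun x _ => by rw [← Finset.sum_mul, hmarg]
  -- Jensen
  have jensen : ∀ x, φ (∑ y, P x y * g y) ≤ ∑ y, P x y * φ (g y) := by
    intro x
    have := hφ.map_sum_le (t := Finset.univ) (w := P x) (p := g)
      (fun i _ => hP0 x i) (hP1 x) (fun i _ => Set.mem_univ _)
    simpa [smul_eq_mul] using this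
  have hsum_jensen : ∑ x, μ x * φ (∑ y, P x y * g y) ≤ ∑ y, ν y * φ (g y) := by
    rw [← swap (fun y => φ (g y))]
    exact Finset.sum_le_sum fun x _ =>
      mul_le_mul_of_nonneg_left (jensen x) (hμ0 x)
  -- mean identity
  have hmean : ∑ x, μ x * ∑ y, P x y * g y = ∑ x, μ x * f x := by
    rw [swap g, hg]
    exact swap2 f
  -- conservation hypothesis rearranged
  have h := hcons f hf
  have hS : (∑ y, ν y *
      ((∑ x, Q y x * φ (f x)) - φ (∑ x, Q y x * f x)))
      = (∑ x, μ x * φ (f x)) - ∑ y, ν y * φ (g y) := by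
    simp_rw [mul_sub, Finset.sum_sub_distrib]
    rw [swap2 (fun x => φ (f x))]
  rw [hS] at h
  set M := ∑ x, μ x * φ (f x)
  set E := φ (∑ x, μ x * f x)
  set T := ∑ y, ν y * φ (g y)
  rw [one_div, inv_mul_eq_div, le_div_iff₀ hκ0] at h
  have hLHS : (∑ x, μ x * φ (∑ y, P x y * (∑ z, Q y z * f z)))
      - φ (∑ x, μ x * (∑ y, P x y * (∑ z, Q y z * f z))) ≤ T - E := by
    have : φ (∑ x, μ x * ∑ y, P x y * g y) = E := by rw [hmean]
    have h2 := hsum_jensen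
    simp only [hg] at h2 this ⊢
    linarith
  nlinarith [hLHS, h]
end

section
/- Let u ∈ ℝ^n with ‖u‖_2^2 ≤ 1 + α/√n for constant α ≥ 0, let x_0, x_1, ..., x_n be i.i.d. random indices in [n] with P(x = k) ∝ u_k^2, and let T be the first collision time. Then Σ_{ℓ=0}^∞ P(T ≥ ℓ)·‖u‖_2^{2ℓ} ≤ 1 + 2√n · Σ_{k: k√n ∈ ℕ} (1/√n)·exp(-k²/2)·exp(αk) = O(√n). -/
open MeasureTheory ProbabilityTheory

section CollisionAux

open Finset

variable {n : ℕ} (q : Fin n → ℝ)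

/-- elementary symmetric polynomial as a sum over subsets -/
noncomputable def esym (m : ℕ) (s : Finset (Fin n)) : ℝ :=
  ∑ A ∈ s.powersetCard m, ∏ k ∈ A, q k

lemma esym_nonneg (hq : ∀ k, 0 ≤ q k) (m : ℕ) (s : Finset (Fin n)) : 0 ≤ esym q m s :=
  Finset.sum_nonneg fun A _ => Finset.prod_nonneg fun k _ => hq k

lemma esym_zero (s : Finset (Fin n)) : esym q 0 s = 1 := by
  simp [esym, Finset.powersetCard_zero]

lemma esym_insert {a : Fin n} {s : Finset (Fin n)} (h : a ∉ s) (m : ℕ) :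
    esym q (m + 1) (insert a s) = esym q (m + 1) s + q a * esym q m s := by
  rw [esym, Finset.powersetCard_succ_insert h, Finset.sum_union, Finset.sum_image]
  · rw [esym, esym, Finset.mul_sum]
    congr 1
    refine Finset.sum_congr rfl fun B hB => ?_
    rw [Finset.prod_insert fun hc => h ((Finset.mem_powersetCard.mp hB).1 hc)]
  · intro B hB C hC hBC
    have hB' := (Finset.mem_powersetCard.mp hB).1
    have hC' := (Finset.mem_powersetCard.mp hC).1
    have : (insert a B).erase a = (insert a C).erase a := by rw [hBC]
    rwa [Finset.erase_insert fun hc => h (hB' hc),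
      Finset.erase_insert fun hc => h (hC' hc)] at this
  · rw [Finset.disjoint_right]
    intro A hA hA'
    obtain ⟨B, hB, rfl⟩ := Finset.mem_image.mp hA
    exact h ((Finset.mem_powersetCard.mp hA').1 (Finset.mem_insert_self a B))

lemma esym_erase {k : Fin n} {s : Finset (Fin n)} (hk : k ∈ s) (m : ℕ) :
    esym q (m + 1) s = esym q (m + 1) (s.erase k) + q k * esym q m (s.erase k) := by
  conv_lhs => rw [← Finset.insert_erase hk]
  exact esym_insert q (Finset.notMem_erase k s) m

lemma esym_filter_mem {k : Fin n} {s : Finset (Fin n)} (hk : k ∈ s) (m : ℕ) :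
    q k * esym q m (s.erase k)
      = ∑ A ∈ (s.powersetCard (m + 1)).filter (fun A => k ∈ A), ∏ j ∈ A, q j := by
  rw [esym, Finset.mul_sum]
  refine Finset.sum_bij' (fun B _ => insert k B) (fun A _ => A.erase k) ?_ ?_ ?_ ?_ ?_
  · intro B hB
    obtain ⟨hBs, hBc⟩ := Finset.mem_powersetCard.mp hB
    have hkB : k ∉ B := fun hc => Finset.notMem_erase k s (hBs hc)
    refine Finset.mem_filter.mpr ⟨Finset.mem_powersetCard.mpr ⟨?_, ?_⟩, Finset.mem_insert_self k B⟩
    · exact Finset.insert_subset hk (hBs.trans (Finset.erase_subset k s))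
    · rw [Finset.card_insert_of_notMem hkB, hBc]
  · intro A hA
    obtain ⟨hA1, hA2⟩ := Finset.mem_filter.mp hA
    obtain ⟨hAs, hAc⟩ := Finset.mem_powersetCard.mp hA1
    refine Finset.mem_powersetCard.mpr ⟨?_, ?_⟩
    · exact fun x hx => Finset.mem_erase.mpr
        ⟨(Finset.mem_erase.mp hx).1, hAs (Finset.mem_of_mem_erase hx)⟩
    · rw [Finset.card_erase_of_mem hA2, hAc]; rfl
  · intro B hB
    obtain ⟨hBs, _⟩ := Finset.mem_powersetCard.mp hB
    exact Finset.erase_insert fun hc => Finset.notMem_erase k s (hBs hc)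
  · intro A hA
    exact Finset.insert_erase (Finset.mem_filter.mp hA).2
  · intro B hB
    obtain ⟨hBs, _⟩ := Finset.mem_powersetCard.mp hB
    rw [Finset.prod_insert fun hc => Finset.notMem_erase k s (hBs hc)]

lemma sum_esym_erase {s : Finset (Fin n)} (m : ℕ) :
    ∑ k ∈ s, q k * esym q m (s.erase k) = (m + 1 : ℝ) * esym q (m + 1) s := by
  have h1 : ∀ k ∈ s, q k * esym q m (s.erase k)
      = ∑ A ∈ s.powersetCard (m + 1), if k ∈ A then ∏ j ∈ A, q j else 0 := by
    intro k hk
    rw [esym_filter_mem q hk m, Finset.sum_filter]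
  rw [Finset.sum_congr rfl h1, Finset.sum_comm]
  rw [esym, Finset.mul_sum]
  refine Finset.sum_congr rfl fun A hA => ?_
  obtain ⟨hAs, hAc⟩ := Finset.mem_powersetCard.mp hA
  rw [← Finset.sum_filter]
  have heq : s.filter (fun k => k ∈ A) = A :=
    (Finset.filter_mem_eq_inter).trans (Finset.inter_eq_right.mpr hAs)
  rw [heq, Finset.sum_const, hAc, nsmul_eq_mul]
  push_cast
  ring

lemma w_monovary (hq : ∀ k, 0 ≤ q k) (r : ℕ) :
    Monovary (fun k => q k * esym q r (Finset.univ.erase k)) q := by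
  intro k l hlt
  have hkl : l ≠ k := fun h => absurd rfl (h ▸ hlt.ne)
  cases r with
  | zero => simp only [esym_zero]; nlinarith [hlt.le]
  | succ t =>
      have hlk : l ∈ Finset.univ.erase k := Finset.mem_erase.mpr ⟨hkl, Finset.mem_univ l⟩
      have hkl' : k ∈ Finset.univ.erase l := Finset.mem_erase.mpr ⟨fun h => hkl h.symm, Finset.mem_univ k⟩
      show q k * esym q (t+1) (Finset.univ.erase k) ≤ q l * esym q (t+1) (Finset.univ.erase l)
      rw [esym_erase q hlk t, esym_erase q hkl' t, Finset.erase_right_comm]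
      have h1 := esym_nonneg q hq (t + 1) ((Finset.univ.erase l).erase k)
      have h2 := esym_nonneg q hq t ((Finset.univ.erase l).erase k)
      nlinarith [hlt.le, hq k, hq l]

lemma esym_one (hsum : ∑ k, q k = 1) : esym q 1 Finset.univ = 1 := by
  have h := sum_esym_erase q (s := (Finset.univ : Finset (Fin n))) 0
  simp only [esym_zero, mul_one] at h
  norm_num at h
  rw [← h, hsum]

lemma esym_step (hq : ∀ k, 0 ≤ q k) (hsum : ∑ k, q k = 1) (hn : 0 < n) (m : ℕ) :
    ((m : ℝ) + 1) * esym q (m + 1) Finset.univ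
      ≤ (1 - (m : ℝ) / n) * esym q m Finset.univ := by
  cases m with
  | zero => simp [esym_one q hsum, esym_zero]
  | succ r =>
      have hnR : (0 : ℝ) < n := by exact_mod_cast hn
      have I2 : ∑ k, q k * esym q (r + 1) (Finset.univ.erase k)
          = ((r : ℝ) + 1 + 1) * esym q (r + 1 + 1) Finset.univ := by
        have := sum_esym_erase q (s := (Finset.univ : Finset (Fin n))) (r + 1)
        rw [this]; push_cast; ring
      have hsplit : ∀ k : Fin n, esym q (r + 1) (Finset.univ.erase k)
          = esym q (r + 1) Finset.univ - q k * esym q r (Finset.univ.erase k) := by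
        intro k
        have := esym_erase q (Finset.mem_univ k) r
        linarith [this]
      have hF : ∑ k, q k * esym q (r + 1) (Finset.univ.erase k)
          = esym q (r + 1) Finset.univ
            - ∑ k, (q k * esym q r (Finset.univ.erase k)) * q k := by
        rw [Finset.sum_congr rfl (fun k _ => by rw [hsplit k])]
        have : ∀ k : Fin n, q k * (esym q (r+1) Finset.univ - q k * esym q r (Finset.univ.erase k))
            = q k * esym q (r+1) Finset.univ - (q k * esym q r (Finset.univ.erase k)) * q k :=
          fun k => by ring
        rw [Finset.sum_congr rfl (fun k _ => this k), Finset.sum_sub_distrib,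
          ← Finset.sum_mul, hsum, one_mul]
      have hcheb := (w_monovary q hq r).sum_mul_sum_le_card_mul_sum (g := q)
      rw [hsum, mul_one, sum_esym_erase q (s := (Finset.univ : Finset (Fin n))) r,
        Fintype.card_fin] at hcheb
      have hE1 := esym_nonneg q hq (r + 1) (Finset.univ : Finset (Fin n))
      have key : ((r : ℝ) + 1) / n * esym q (r + 1) Finset.univ
          ≤ ∑ k, (q k * esym q r (Finset.univ.erase k)) * q k := by
        rw [div_mul_eq_mul_div, div_le_iff₀ hnR]
        calc ((r:ℝ) + 1) * esym q (r+1) Finset.univ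
            ≤ (n : ℝ) * ∑ k, (q k * esym q r (Finset.univ.erase k)) * q k := hcheb
          _ = (∑ k, (q k * esym q r (Finset.univ.erase k)) * q k) * n := by ring
      rw [show ((r:ℕ)+1+1 : ℕ) = ((r+1)+1 : ℕ) from rfl] at *
      push_cast
      rw [← I2, hF]
      push_cast at key ⊢
      linarith [key]

lemma esym_factorial_le (hq : ∀ k, 0 ≤ q k) (hsum : ∑ k, q k = 1) (hn : 0 < n) :
    ∀ ℓ, ℓ ≤ n → (ℓ.factorial : ℝ) * esym q ℓ Finset.univ
      ≤ ∏ i ∈ Finset.range ℓ, (1 - (i : ℝ) / n) := by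
  intro ℓ
  induction ℓ with
  | zero => intro _; simp [esym_zero]
  | succ m ih =>
      intro hm
      have hmn : m < n := hm
      have hnR : (0 : ℝ) < n := by exact_mod_cast hn
      have hfac : (0 : ℝ) ≤ 1 - (m : ℝ) / n := by
        rw [sub_nonneg, div_le_one hnR]
        exact_mod_cast hmn.le
      have step := esym_step q hq hsum hn m
      have ih' := ih hmn.le
      calc ((m + 1).factorial : ℝ) * esym q (m + 1) Finset.univ
          = (m.factorial : ℝ) * (((m : ℝ) + 1) * esym q (m + 1) Finset.univ) := by
            rw [Nat.factorial_succ]; push_cast; ring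
        _ ≤ (m.factorial : ℝ) * ((1 - (m : ℝ) / n) * esym q m Finset.univ) := by
            exact mul_le_mul_of_nonneg_left step (by positivity)
        _ = (1 - (m : ℝ) / n) * ((m.factorial : ℝ) * esym q m Finset.univ) := by ring
        _ ≤ (1 - (m : ℝ) / n) * ∏ i ∈ Finset.range m, (1 - (i : ℝ) / n) :=
            mul_le_mul_of_nonneg_left ih' hfac
        _ = ∏ i ∈ Finset.range (m + 1), (1 - (i : ℝ) / n) := by
            rw [Finset.prod_range_succ]; ring

lemma sum_inj_eq_factorial_esym (ℓ : ℕ) :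
    ∑ g ∈ (Finset.univ : Finset (Fin ℓ → Fin n)).filter Function.Injective, ∏ i, q (g i)
      = (ℓ.factorial : ℝ) * esym q ℓ Finset.univ := by
  classical
  have hmaps : ∀ g ∈ (Finset.univ : Finset (Fin ℓ → Fin n)).filter Function.Injective,
      Finset.image g Finset.univ ∈ (Finset.univ : Finset (Fin n)).powersetCard ℓ := by
    intro g hg
    have hginj : Function.Injective g := (Finset.mem_filter.mp hg).2
    refine Finset.mem_powersetCard.mpr ⟨Finset.subset_univ _, ?_⟩
    rw [Finset.card_image_of_injective _ hginj, Finset.card_univ, Fintype.card_fin]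
  rw [← Finset.sum_fiberwise_of_maps_to hmaps]
  rw [esym, Finset.mul_sum]
  refine Finset.sum_congr rfl fun A hA => ?_
  obtain ⟨-, hAc⟩ := Finset.mem_powersetCard.mp hA
  have hfiber : ∀ g ∈ ((Finset.univ : Finset (Fin ℓ → Fin n)).filter
        Function.Injective).filter (fun g => Finset.image g Finset.univ = A),
      ∏ i, q (g i) = ∏ k ∈ A, q k := by
    intro g hg
    obtain ⟨hg1, hg2⟩ := Finset.mem_filter.mp hg
    have hginj : Function.Injective g := (Finset.mem_filter.mp hg1).2
    rw [← hg2, Finset.prod_image (fun a _ b _ h => hginj h)]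
  rw [Finset.sum_congr rfl hfiber, Finset.sum_const, nsmul_eq_mul]
  congr 1
  -- cardinality of the fiber is ℓ!
  have hAcard : Fintype.card {k // k ∈ A} = ℓ := by rw [Fintype.card_coe, hAc]
  have hcard : (Finset.univ : Finset (Fin ℓ ≃ {k // k ∈ A})).card
      = (((Finset.univ : Finset (Fin ℓ → Fin n)).filter
        Function.Injective).filter (fun g => Finset.image g Finset.univ = A)).card := by
    refine Finset.card_bij (fun e _ => fun i => (e i : Fin n)) ?_ ?_ ?_
    · intro e _
      refine Finset.mem_filter.mpr ⟨Finset.mem_filter.mpr ⟨Finset.mem_univ _, ?_⟩, ?_⟩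
      · exact fun a b h => e.injective (Subtype.ext h)
      · ext k
        simp only [Finset.mem_image, Finset.mem_univ, true_and]
        constructor
        · rintro ⟨i, rfl⟩; exact (e i).2
        · intro hk; exact ⟨e.symm ⟨k, hk⟩, by simp⟩
    · intro e₁ _ e₂ _ h
      ext i
      exact congrArg Fin.val (congrFun h i)
    · intro g hg
      obtain ⟨hg1, hg2⟩ := Finset.mem_filter.mp hg
      have hginj : Function.Injective g := (Finset.mem_filter.mp hg1).2
      have hmem : ∀ i, g i ∈ A := fun i => hg2 ▸ Finset.mem_image_of_mem g (Finset.mem_univ i)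
      have hbij : Function.Bijective (fun i => (⟨g i, hmem i⟩ : {k // k ∈ A})) := by
        rw [Fintype.bijective_iff_injective_and_card]
        exact ⟨fun a b h => hginj (congrArg Subtype.val h), by rw [hAcard, Fintype.card_fin]⟩
      exact ⟨Equiv.ofBijective _ hbij, Finset.mem_univ _, rfl⟩
  rw [← hcard, Finset.card_univ,
    Fintype.card_equiv (Fintype.equivFinOfCardEq hAcard).symm, Fintype.card_fin]

open MeasureTheory ProbabilityTheory in
lemma prob_collision_le {Ω : Type*} [MeasurableSpace Ω] (μ : Measure Ω) [IsProbabilityMeasure μ]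
    {n : ℕ} (hn : 0 < n) (x : Fin (n + 1) → Ω → Fin n)
    (hindep : iIndepFun x μ)
    (p : Fin n → ℝ) (hp : ∀ k, 0 ≤ p k)
    (hdist : ∀ i k, μ {ω | x i ω = k} = ENNReal.ofReal (p k))
    (ℓ : ℕ) (hℓ : ℓ ≤ n) :
    (μ {ω | ∀ i j : Fin (n + 1), (j : ℕ) < (i : ℕ) → (i : ℕ) < ℓ → x i ω ≠ x j ω}).toReal
      ≤ ∑ g ∈ (Finset.univ : Finset (Fin ℓ → Fin n)).filter Function.Injective,
          ∏ i, p (g i) := by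
  classical
  have hℓ' : ℓ ≤ n + 1 := le_trans hℓ (Nat.le_succ n)
  set G := (Finset.univ : Finset (Fin ℓ → Fin n)).filter Function.Injective with hG
  set t := (Finset.univ : Finset (Fin (n + 1))).filter (fun j : Fin (n + 1) => (j : ℕ) < ℓ) with ht
  set ext : (Fin ℓ → Fin n) → Fin (n + 1) → Fin n := fun g j =>
    if h : (j : ℕ) < ℓ then g ⟨j, h⟩ else ⟨0, hn⟩ with hext
  have hcover : {ω | ∀ i j : Fin (n + 1), (j : ℕ) < (i : ℕ) → (i : ℕ) < ℓ → x i ω ≠ x j ω}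
      ⊆ ⋃ g ∈ G, ⋂ j ∈ t, {ω | x j ω = ext g j} := by
    intro ω hω
    simp only [Set.mem_setOf_eq] at hω
    have hginj : Function.Injective (fun i : Fin ℓ => x (Fin.castLE hℓ' i) ω) := by
      intro a b hab
      by_contra hne
      rcases lt_trichotomy (a : ℕ) (b : ℕ) with h | h | h
      · exact hω (Fin.castLE hℓ' b) (Fin.castLE hℓ' a) h b.isLt hab.symm
      · exact hne (Fin.ext h)
      · exact hω (Fin.castLE hℓ' a) (Fin.castLE hℓ' b) h a.isLt hab
    refine Set.mem_iUnion₂.mpr ⟨fun i => x (Fin.castLE hℓ' i) ω, ?_, ?_⟩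
    · exact Finset.mem_filter.mpr ⟨Finset.mem_univ _, hginj⟩
    · refine Set.mem_iInter₂.mpr fun j hj => ?_
      have hjℓ : (j : ℕ) < ℓ := (Finset.mem_filter.mp hj).2
      have : ext (fun i => x (Fin.castLE hℓ' i) ω) j = x (Fin.castLE hℓ' ⟨(j : ℕ), hjℓ⟩) ω := by
        rw [hext]; exact dif_pos hjℓ
      rw [Set.mem_setOf_eq, this]
      exact congrFun (congrArg x ((Fin.ext rfl : Fin.castLE hℓ' ⟨(j:ℕ), hjℓ⟩ = j)).symm) ω
  have hmeasg : ∀ g ∈ G, μ (⋂ j ∈ t, {ω | x j ω = ext g j})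
      = ∏ j ∈ t, ENNReal.ofReal (p (ext g j)) := by
    intro g _
    rw [hindep.meas_biInter (fun j _ => ⟨{ext g j}, measurableSet_singleton _, by
      ext ω; simp⟩)]
    exact Finset.prod_congr rfl fun j _ => hdist j (ext g j)
  have hmain : μ {ω | ∀ i j : Fin (n + 1), (j : ℕ) < (i : ℕ) → (i : ℕ) < ℓ → x i ω ≠ x j ω}
      ≤ ∑ g ∈ G, ∏ i : Fin ℓ, ENNReal.ofReal (p (g i)) := by
    refine le_trans (measure_mono hcover) (le_trans (measure_biUnion_finset_le _ _) ?_)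
    refine Finset.sum_le_sum fun g hg => ?_
    rw [hmeasg g hg]
    apply le_of_eq
    refine Finset.prod_bij' (fun j hj => (⟨(j : ℕ), (Finset.mem_filter.mp hj).2⟩ : Fin ℓ))
      (fun i _ => Fin.castLE hℓ' i) ?_ ?_ ?_ ?_ ?_
    · intro j hj
      exact Finset.mem_univ _
    · intro i _
      exact Finset.mem_filter.mpr ⟨Finset.mem_univ _, i.isLt⟩
    · intro j hj
      exact Fin.ext rfl
    · intro i _
      exact Fin.ext rfl
    · intro j hj
      have hjℓ : (j : ℕ) < ℓ := (Finset.mem_filter.mp hj).2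
      congr 1
      rw [hext]
      simp only [dif_pos hjℓ]
  have hne : (∑ g ∈ G, ∏ i : Fin ℓ, ENNReal.ofReal (p (g i))) ≠ ⊤ := by
    refine (ENNReal.sum_lt_top.mpr fun g _ => ?_).ne
    exact ENNReal.prod_lt_top fun i _ => ENNReal.ofReal_lt_top
  calc (μ _).toReal ≤ (∑ g ∈ G, ∏ i : Fin ℓ, ENNReal.ofReal (p (g i))).toReal :=
        ENNReal.toReal_mono hne hmain
    _ = ∑ g ∈ G, ∏ i : Fin ℓ, p (g i) := by
        rw [ENNReal.toReal_sum (fun g _ => (ENNReal.prod_lt_top fun i _ => ENNReal.ofReal_lt_top).ne)]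
        exact Finset.sum_congr rfl fun g _ => by
          rw [ENNReal.toReal_prod]
          exact Finset.prod_congr rfl fun i _ => ENNReal.toReal_ofReal (hp _)

lemma exp_half_le_two : Real.exp (1 / 2) ≤ 2 := by
  have h1 : Real.exp ((2 : ℕ) * (1 / 2 : ℝ)) = Real.exp (1 / 2) ^ (2 : ℕ) :=
    Real.exp_nat_mul _ 2
  norm_num at h1
  nlinarith [Real.exp_pos (1 / 2 : ℝ), Real.exp_one_lt_d9, h1]

lemma gfun_summable {n : ℕ} (hn : 0 < n) (α : ℝ) :
    Summable (fun m : ℕ => Real.exp (-((m : ℝ) / Real.sqrt n) ^ 2 / 2)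
      * Real.exp (α * ((m : ℝ) / Real.sqrt n))) := by
  have hnR : (0 : ℝ) < n := by exact_mod_cast hn
  set s := Real.sqrt n with hsdef
  have hs : 0 < s := Real.sqrt_pos.mpr hnR
  refine Summable.of_nonneg_of_le (fun m => by positivity)
    (fun m => ?_) ((summable_geometric_of_lt_one (le_of_lt (Real.exp_pos _))
      (Real.exp_lt_one_iff.mpr (by norm_num : (-1:ℝ) < 0))).mul_left (Real.exp ((α + s) ^ 2 / 2)))
  rw [← Real.exp_add]
  have hpow : Real.exp (-1 : ℝ) ^ m = Real.exp (-(m : ℝ)) := by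
    rw [← Real.exp_nat_mul]; ring_nf
  rw [hpow, ← Real.exp_add, Real.exp_le_exp]
  have hms : ((m : ℝ) / s) * s = (m : ℝ) := div_mul_cancel₀ _ hs.ne'
  nlinarith [sq_nonneg ((m : ℝ) / s - (α + s))]


end CollisionAux

/-- Key estimate for `O(√n)`-spectral independence of the rank-one Ising model at the
critical interaction norm: if `‖u‖₂² ≤ 1 + α/√n`, and `x₀, ..., xₙ` are i.i.d. random
indices in `[n]` with `P(x = k) ∝ u_k²`, `T` the first collision time, then
`Σ_ℓ P(T ≥ ℓ) ‖u‖₂^{2ℓ} ≤ 1 + 2√n Σ_{k√n ∈ ℕ} (1/√n) e^{-k²/2} e^{αk}`. -/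
theorem rank_one_collision_series_bound
    {Ω : Type*} [MeasurableSpace Ω] (μ : Measure Ω) [IsProbabilityMeasure μ]
    (n : ℕ) (hn : 0 < n) (α : ℝ) (hα : 0 ≤ α)
    (u : Fin n → ℝ)
    (hnorm : ∑ j, u j ^ 2 ≤ 1 + α / Real.sqrt n)
    (x : Fin (n + 1) → Ω → Fin n)
    (hmeas : ∀ i, Measurable (x i))
    (hindep : iIndepFun x μ)
    (hdist : ∀ i k, μ {ω | x i ω = k} = ENNReal.ofReal (u k ^ 2 / ∑ j, u j ^ 2)) :
    (∑' ℓ : ℕ,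
        (μ {ω | ∀ i j : Fin (n + 1), (j : ℕ) < (i : ℕ) → (i : ℕ) < ℓ → x i ω ≠ x j ω}).toReal
          * (∑ j, u j ^ 2) ^ ℓ)
      ≤ 1 + 2 * Real.sqrt n *
          ∑' m : ℕ, (1 / Real.sqrt n) * Real.exp (-((m : ℝ) / Real.sqrt n) ^ 2 / 2)
            * Real.exp (α * ((m : ℝ) / Real.sqrt n)) := by
  classical
  have hnR : (0 : ℝ) < n := by exact_mod_cast hn
  set s := Real.sqrt n with hsdef
  have hs : 0 < s := Real.sqrt_pos.mpr hnR
  have hs2 : s ^ 2 = n := Real.sq_sqrt hnR.le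
  set S := ∑ j, u j ^ 2 with hSdef
  have hS0 : 0 ≤ S := Finset.sum_nonneg fun j _ => sq_nonneg _
  have hSpos : 0 < S := by
    rcases hS0.lt_or_eq with h | h
    · exact h
    · exfalso
      have h0 : ∀ k : Fin n, μ {ω | x 0 ω = k} = 0 := by
        intro k
        rw [hdist 0 k, ← h, div_zero, ENNReal.ofReal_zero]
      have hcov : (Set.univ : Set Ω) ⊆ ⋃ k ∈ (Finset.univ : Finset (Fin n)), {ω | x 0 ω = k} :=
        fun ω _ => Set.mem_iUnion₂.mpr ⟨x 0 ω, Finset.mem_univ _, rfl⟩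
      have hle : μ Set.univ ≤ ∑ k ∈ (Finset.univ : Finset (Fin n)), μ {ω | x 0 ω = k} :=
        (measure_mono hcov).trans (measure_biUnion_finset_le _ _)
      simp only [h0, Finset.sum_const_zero, measure_univ] at hle
      exact one_ne_zero (le_antisymm hle zero_le)
  set p : Fin n → ℝ := fun k => u k ^ 2 / S with hpdef
  have hp : ∀ k, 0 ≤ p k := fun k => div_nonneg (sq_nonneg _) hS0
  have hpsum : ∑ k, p k = 1 := by
    rw [hpdef, ← Finset.sum_div, ← hSdef, div_self hSpos.ne']
  set E : ℕ → Set Ω := fun ℓ =>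
    {ω | ∀ i j : Fin (n + 1), (j : ℕ) < (i : ℕ) → (i : ℕ) < ℓ → x i ω ≠ x j ω} with hE
  set f : ℕ → ℝ := fun ℓ => (μ (E ℓ)).toReal * S ^ ℓ with hf
  set gfun : ℕ → ℝ := fun m =>
    Real.exp (-((m : ℝ) / s) ^ 2 / 2) * Real.exp (α * ((m : ℝ) / s)) with hg
  have hgpos : ∀ m, 0 ≤ gfun m := fun m => by rw [hg]; positivity
  have hgsummable : Summable gfun := gfun_summable hn α
  -- terms vanish for ℓ > n
  have hzero : ∀ ℓ, ℓ ∉ Finset.range (n + 1) → f ℓ = 0 := by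
    intro ℓ hℓ
    have hnℓ : n + 1 ≤ ℓ := le_of_not_gt fun hc => hℓ (Finset.mem_range.mpr hc)
    have hEempty : E ℓ = ∅ := by
      rw [Set.eq_empty_iff_forall_notMem]
      intro ω hω
      obtain ⟨i, j, hne, heq⟩ := Fintype.exists_ne_map_eq_of_card_lt
        (fun i : Fin (n + 1) => x i ω) (by simp)
      rcases lt_trichotomy (i : ℕ) (j : ℕ) with h | h | h
      · exact hω j i h (lt_of_lt_of_le j.isLt hnℓ) heq.symm
      · exact hne (Fin.ext h)
      · exact hω i j h (lt_of_lt_of_le i.isLt hnℓ) heq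
    rw [hf]
    simp [hEempty]
  have htsum : (∑' ℓ : ℕ, f ℓ) = ∑ ℓ ∈ Finset.range (n + 1), f ℓ := tsum_eq_sum hzero
  have hf0 : f 0 = 1 := by
    have : E 0 = Set.univ := by
      rw [Set.eq_univ_iff_forall]
      intro ω i j _ hi
      exact absurd hi (Nat.not_lt_zero _)
    rw [hf]; simp [this]
  -- term-wise bound
  have hterm : ∀ i ∈ Finset.range n, f (i + 1) ≤ 2 * gfun (i + 1) := by
    intro i hi
    have hin : i < n := Finset.mem_range.mp hi
    set ℓ := i + 1 with hℓdef
    have hℓn : ℓ ≤ n := hin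
    have hℓR : ((ℓ : ℕ) : ℝ) = (i : ℝ) + 1 := by rw [hℓdef]; push_cast; ring
    -- probability bound
    have hprob := prob_collision_le μ hn x hindep p hp (fun i k => hdist i k) ℓ hℓn
    rw [sum_inj_eq_factorial_esym] at hprob
    have hfact := esym_factorial_le p hp hpsum hn ℓ hℓn
    have hgauss : (∑ j ∈ Finset.range ℓ, (j : ℝ)) = (i : ℝ) * ((i : ℝ) + 1) / 2 := by
      have h2 := Finset.sum_range_id_mul_two ℓ
      have h3 : (∑ j ∈ Finset.range ℓ, j) * 2 = (i + 1) * i := by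
        rw [h2, hℓdef]; simp
      have h4 : (∑ j ∈ Finset.range ℓ, (j : ℝ)) * 2 = ((i : ℝ) + 1) * i := by
        have h5 := congrArg (fun t : ℕ => (t : ℝ)) h3
        push_cast at h5
        linarith [h5]
      linarith
    have hprod : ∏ j ∈ Finset.range ℓ, (1 - (j : ℝ) / n)
        ≤ Real.exp (-((i : ℝ) * ((i : ℝ) + 1) / 2) / n) := by
      have hstep : ∀ j ∈ Finset.range ℓ, (1 - (j : ℝ) / n) ≤ Real.exp (-(j : ℝ) / n) := by
        intro j _
        have h5 := Real.add_one_le_exp (-((j : ℝ) / n))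
        calc 1 - (j : ℝ) / n = -((j : ℝ) / n) + 1 := by ring
          _ ≤ Real.exp (-((j : ℝ) / n)) := h5
          _ = Real.exp (-(j : ℝ) / n) := by rw [neg_div]
      have hnonneg : ∀ j ∈ Finset.range ℓ, 0 ≤ 1 - (j : ℝ) / n := by
        intro j hj
        have hjn : (j : ℝ) ≤ n := by
          have : j < ℓ := Finset.mem_range.mp hj
          have : j ≤ n := by omega
          exact_mod_cast this
        rw [sub_nonneg]
        exact div_le_one_of_le₀ hjn hnR.le
      calc ∏ j ∈ Finset.range ℓ, (1 - (j : ℝ) / n)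
          ≤ ∏ j ∈ Finset.range ℓ, Real.exp (-(j : ℝ) / n) :=
            Finset.prod_le_prod hnonneg hstep
        _ = Real.exp (∑ j ∈ Finset.range ℓ, -(j : ℝ) / n) := (Real.exp_sum _ _).symm
        _ = Real.exp (-((i : ℝ) * ((i : ℝ) + 1) / 2) / n) := by
            congr 1
            rw [← Finset.sum_div, Finset.sum_neg_distrib, hgauss]
    have hmu : (μ (E ℓ)).toReal ≤ Real.exp (-((i : ℝ) * ((i : ℝ) + 1) / 2) / n) :=
      hprob.trans (hfact.trans hprod)
    have hSpow : S ^ ℓ ≤ Real.exp (α * ((ℓ : ℝ) / s)) := by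
      have h1 : S ≤ Real.exp (α / s) := by
        have := Real.add_one_le_exp (α / s)
        calc S ≤ 1 + α / s := hnorm
          _ ≤ Real.exp (α / s) := by linarith
      calc S ^ ℓ ≤ Real.exp (α / s) ^ ℓ := pow_le_pow_left₀ hS0 h1 ℓ
        _ = Real.exp ((ℓ : ℝ) * (α / s)) := (Real.exp_nat_mul _ ℓ).symm
        _ = Real.exp (α * ((ℓ : ℝ) / s)) := by
            rw [show (ℓ : ℝ) * (α / s) = α * ((ℓ : ℝ) / s) by ring]
    have hexp2 : Real.exp (-((i : ℝ) * ((i : ℝ) + 1) / 2) / n)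
        ≤ 2 * Real.exp (-(((ℓ : ℕ) : ℝ) / s) ^ 2 / 2) := by
      have hll : ((((ℓ : ℕ) : ℝ)) / s) ^ 2 = ((ℓ : ℕ) : ℝ) ^ 2 / n := by
        rw [div_pow, hs2]
      have hsplit : (-((i : ℝ) * ((i : ℝ) + 1) / 2) / n)
          = -(((ℓ : ℕ) : ℝ) ^ 2 / n) / 2 + ((ℓ : ℕ) : ℝ) / (2 * n) := by
        rw [hℓR]; field_simp; ring
      rw [hsplit, Real.exp_add]
      have h3 : Real.exp (((ℓ : ℕ) : ℝ) / (2 * n)) ≤ 2 := by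
        refine le_trans ?_ exp_half_le_two
        rw [Real.exp_le_exp]
        rw [div_le_div_iff₀ (by positivity) (by norm_num)]
        have : ((ℓ : ℕ) : ℝ) ≤ n := by exact_mod_cast hℓn
        linarith
      calc Real.exp (-(((ℓ : ℕ) : ℝ) ^ 2 / n) / 2) * Real.exp (((ℓ : ℕ) : ℝ) / (2 * n))
          ≤ Real.exp (-(((ℓ : ℕ) : ℝ) ^ 2 / n) / 2) * 2 :=
            mul_le_mul_of_nonneg_left h3 (Real.exp_pos _).le
        _ = 2 * Real.exp (-(((ℓ : ℕ) : ℝ) / s) ^ 2 / 2) := by rw [hll]; ring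
    calc f ℓ = (μ (E ℓ)).toReal * S ^ ℓ := rfl
      _ ≤ Real.exp (-((i : ℝ) * ((i : ℝ) + 1) / 2) / n) * Real.exp (α * ((ℓ : ℝ) / s)) := by
          refine mul_le_mul hmu hSpow (by positivity) (Real.exp_pos _).le
      _ ≤ (2 * Real.exp (-(((ℓ : ℕ) : ℝ) / s) ^ 2 / 2)) * Real.exp (α * ((ℓ : ℝ) / s)) := by
          refine mul_le_mul_of_nonneg_right hexp2 (Real.exp_pos _).le
      _ = 2 * gfun ℓ := by rw [hg]; ring
  -- assemble
  have hsum1 : ∑ ℓ ∈ Finset.range (n + 1), f ℓ = (∑ i ∈ Finset.range n, f (i + 1)) + f 0 :=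
    Finset.sum_range_succ' f n
  have hsum2 : ∑ i ∈ Finset.range n, f (i + 1) ≤ 2 * ∑' m, gfun m := by
    calc ∑ i ∈ Finset.range n, f (i + 1) ≤ ∑ i ∈ Finset.range n, 2 * gfun (i + 1) :=
          Finset.sum_le_sum hterm
      _ = 2 * ∑ i ∈ Finset.range n, gfun (i + 1) := by rw [Finset.mul_sum]
      _ ≤ 2 * ∑ m ∈ Finset.range (n + 1), gfun m := by
          have := Finset.sum_range_succ' gfun n
          have h4 : ∑ i ∈ Finset.range n, gfun (i + 1) ≤ ∑ m ∈ Finset.range (n + 1), gfun m := by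
            rw [this]; linarith [hgpos 0]
          linarith
      _ ≤ 2 * ∑' m, gfun m := by
          have := Summable.sum_le_tsum (Finset.range (n + 1)) (fun m _ => hgpos m) hgsummable
          linarith
  have hrhs : (∑' m : ℕ, (1 / s) * Real.exp (-((m : ℝ) / s) ^ 2 / 2)
      * Real.exp (α * ((m : ℝ) / s))) = (1 / s) * ∑' m, gfun m := by
    rw [← tsum_mul_left]
    refine tsum_congr fun m => ?_
    rw [hg]; ring
  rw [htsum, hsum1, hrhs, hf0]
  have hss : s * (1 / s) = 1 := mul_one_div_cancel hs.ne'
  have : 2 * s * ((1 / s) * ∑' m, gfun m) = 2 * ∑' m, gfun m := by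
    calc 2 * s * ((1 / s) * ∑' m, gfun m) = 2 * (s * (1 / s)) * ∑' m, gfun m := by ring
      _ = 2 * ∑' m, gfun m := by rw [hss]; ring
  rw [this]
  linarith [hsum2]
end

section
/- Let d ≥ 2 and define T(Δ) = Δ λ_c(Δ)/(1 + λ_c(Δ)) where λ_c(Δ) = (Δ-1)^{Δ-1}/(Δ-2)^Δ. Then T is increasing in Δ ≥ 3 and T(Δ) ≤ e for all Δ ≥ 3; in particular Δλ/(1+λ) ≤ e whenever 0 < λ ≤ λ_c(Δ). -/
/-- The critical fugacity `λ_c(Δ) = (Δ-1)^{Δ-1}/(Δ-2)^Δ` of the hardcore model. -/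
noncomputable def lambdaC (Δ : ℕ) : ℝ := ((Δ : ℝ) - 1) ^ (Δ - 1) / ((Δ : ℝ) - 2) ^ Δ

/-- `T(Δ) = Δ λ_c(Δ) / (1 + λ_c(Δ))`. -/
noncomputable def TΔ (Δ : ℕ) : ℝ := (Δ : ℝ) * lambdaC Δ / (1 + lambdaC Δ)

theorem bern3 (x : ℝ) (hx : 0 ≤ x) (m : ℕ) :
    1 + (m:ℝ)*x + (m:ℝ)*((m:ℝ)-1)/2*x^2 + (m:ℝ)*((m:ℝ)-1)*((m:ℝ)-2)/6*x^3 ≤ (1+x)^m := by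
  induction m with
  | zero => norm_num
  | succ k ih =>
    have h1x : (0:ℝ) ≤ 1 + x := by linarith
    have h := mul_le_mul_of_nonneg_right ih h1x
    have hk : (0:ℝ) ≤ (k:ℝ) := Nat.cast_nonneg k
    have hfac : (0:ℝ) ≤ (k:ℝ)*((k:ℝ)-1)*((k:ℝ)-2) := by
      rcases k with _|_|k
      · norm_num
      · norm_num
      · have h0k : (0:ℝ) ≤ (k:ℝ) := Nat.cast_nonneg k
        push_cast
        nlinarith [mul_nonneg (mul_nonneg (by linarith : (0:ℝ) ≤ (k:ℝ)+2) (by linarith : (0:ℝ) ≤ (k:ℝ)+1)) h0k]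
    simp only [Nat.cast_add, Nat.cast_one, pow_succ]
    nlinarith [h, mul_nonneg hfac (mul_nonneg (mul_nonneg (mul_nonneg hx hx) hx) hx)]

theorem expquartic (t : ℝ) (h0 : 0 ≤ t) (h1 : t ≤ 1) :
    Real.exp t ≤ 1 + t + t^2/2 + t^3/6 + 5/96*t^4 := by
  have h := Real.exp_bound' h0 h1 (n := 4) (by norm_num)
  simp [Finset.sum_range_succ, Nat.factorial] at h
  nlinarith [h]

theorem poly_ineq (N : ℝ) (hN : 4 ≤ N) :
    N*(1+(N-2)⁻¹+(N-2)⁻¹^2/2+(N-2)⁻¹^3/6+5/96*(N-2)⁻¹^4)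
      ≤ (N+1) + (N-2)⁻¹*(1+(N-1)*(N-2)⁻¹+(N-1)*((N-1)-1)/2*(N-2)⁻¹^2
          +(N-1)*((N-1)-1)*((N-1)-2)/6*(N-2)⁻¹^3) := by
  have hN2 : (0:ℝ) < N-2 := by linarith
  have hpos : (0:ℝ) ≤ 16*N^3-64*N^2+11*N+96 := by
    nlinarith [sq_nonneg (N-4), mul_nonneg (by linarith : (0:ℝ) ≤ N-4) (sq_nonneg (N-4))]
  have hid : ((N+1) + (N-2)⁻¹*(1+(N-1)*(N-2)⁻¹+(N-1)*((N-1)-1)/2*(N-2)⁻¹^2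
          +(N-1)*((N-1)-1)*((N-1)-2)/6*(N-2)⁻¹^3))
      - N*(1+(N-2)⁻¹+(N-2)⁻¹^2/2+(N-2)⁻¹^3/6+5/96*(N-2)⁻¹^4)
      = (16*N^3-64*N^2+11*N+96)/96 * ((N-2)⁻¹)^4 := by
    field_simp
    ring
  have h4 : (0:ℝ) ≤ ((N-2)⁻¹)^4 := by positivity
  nlinarith [mul_nonneg (div_nonneg hpos (by norm_num : (0:ℝ) ≤ 96)) h4, hid]

theorem key_ineq (Δ : ℕ) (h : 4 ≤ Δ) :
    (Δ:ℝ) * (((Δ:ℝ)-1)^2)^Δ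
      ≤ ((Δ:ℝ)+1) * ((Δ:ℝ)*((Δ:ℝ)-2))^Δ + (Δ:ℝ)^Δ * ((Δ:ℝ)-1)^(Δ-1) := by
  set N : ℝ := (Δ:ℝ) with hNdef
  have hN : (4:ℝ) ≤ N := by rw [hNdef]; exact_mod_cast h
  have hN2 : (0:ℝ) < N - 2 := by linarith
  have hN0 : (0:ℝ) < N := by linarith
  set t : ℝ := (N-2)⁻¹ with htdef
  have ht : 0 < t := inv_pos.2 hN2
  have htN : t * (N-2) = 1 := inv_mul_cancel₀ hN2.ne'
  have ht2 : t ≤ 1/2 := by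
    rw [htdef, inv_eq_one_div, div_le_div_iff₀ hN2 (by norm_num)]; linarith
  have ha : (0:ℝ) < N*(N-2) := by positivity
  have haΔ : (0:ℝ) ≤ (N*(N-2))^Δ := by positivity
  -- upper bound on ((N-1)^2)^Δ
  have h1 : (N-1)^2 = (N*(N-2))*(1+t/N) := by
    rw [htdef]
    field_simp
    ring
  have h3 : (1+t/N)^Δ ≤ Real.exp t := by
    have e1 : (1+t/N) ≤ Real.exp (t/N) := by
      have := Real.add_one_le_exp (t/N); linarith
    calc (1+t/N)^Δ ≤ (Real.exp (t/N))^Δ := by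
          apply pow_le_pow_left₀ (by positivity) e1
      _ = Real.exp ((Δ:ℝ)*(t/N)) := (Real.exp_nat_mul _ Δ).symm
      _ = Real.exp t := by
          congr 1
          rw [hNdef] at hN0 ⊢
          field_simp
  have h4 : Real.exp t ≤ 1 + t + t^2/2 + t^3/6 + 5/96*t^4 :=
    expquartic t ht.le (by linarith)
  -- lower bound on (N-1)^(Δ-1)
  have hcast : ((Δ-1 : ℕ):ℝ) = N - 1 := by
    rw [Nat.cast_sub (by omega)]; norm_num [hNdef]
  have h5 : 1 + (N-1)*t + (N-1)*((N-1)-1)/2*t^2 + (N-1)*((N-1)-1)*((N-1)-2)/6*t^3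
      ≤ (1+t)^(Δ-1) := by
    have := bern3 t ht.le (Δ-1)
    rwa [hcast] at this
  have h6 : (N-1)^(Δ-1) = (N-2)^(Δ-1) * (1+t)^(Δ-1) := by
    rw [← mul_pow]
    congr 1
    linear_combination (-1 : ℝ) * htN
  have h7 : N^Δ * (N-2)^(Δ-1) = (N*(N-2))^Δ * t := by
    have hΔ1 : Δ = (Δ-1) + 1 := by omega
    have hp : (N-2)^Δ = (N-2)^(Δ-1)*(N-2) := by
      conv_lhs => rw [hΔ1]
      rw [pow_succ]
    rw [mul_pow, hp]
    linear_combination (-(N^Δ*(N-2)^(Δ-1))) * htN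
  have hpoly := poly_ineq N hN
  rw [← htdef] at hpoly
  -- assemble
  have hB : (0:ℝ) ≤ 1 + (N-1)*t + (N-1)*((N-1)-1)/2*t^2 + (N-1)*((N-1)-1)*((N-1)-2)/6*t^3 := by
    nlinarith [mul_nonneg (by linarith : (0:ℝ) ≤ N-1) ht.le,
      mul_nonneg (mul_nonneg (by linarith : (0:ℝ) ≤ N-1) (by linarith : (0:ℝ) ≤ N-2)) (pow_nonneg ht.le 2),
      mul_nonneg (mul_nonneg (mul_nonneg (by linarith : (0:ℝ) ≤ N-1) (by linarith : (0:ℝ) ≤ N-2)) (by linarith : (0:ℝ) ≤ N-3)) (pow_nonneg ht.le 3)]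
  calc N * ((N-1)^2)^Δ = N * ((N*(N-2))^Δ * (1+t/N)^Δ) := by rw [h1, mul_pow]
    _ ≤ N * ((N*(N-2))^Δ * (1 + t + t^2/2 + t^3/6 + 5/96*t^4)) := by
        apply mul_le_mul_of_nonneg_left _ hN0.le
        exact mul_le_mul_of_nonneg_left (h3.trans h4) haΔ
    _ = (N*(N-2))^Δ * (N * (1 + t + t^2/2 + t^3/6 + 5/96*t^4)) := by ring
    _ ≤ (N*(N-2))^Δ * ((N+1) + t*(1 + (N-1)*t + (N-1)*((N-1)-1)/2*t^2
          + (N-1)*((N-1)-1)*((N-1)-2)/6*t^3)) := mul_le_mul_of_nonneg_left hpoly haΔ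
    _ ≤ (N*(N-2))^Δ * ((N+1) + t*(1+t)^(Δ-1)) := by
        apply mul_le_mul_of_nonneg_left _ haΔ
        have := mul_le_mul_of_nonneg_left h5 ht.le
        linarith
    _ = (N+1) * (N*(N-2))^Δ + N^Δ * (N-2)^(Δ-1) * (1+t)^(Δ-1) := by rw [h7]; ring
    _ = (N+1) * (N*(N-2))^Δ + N^Δ * (N-1)^(Δ-1) := by rw [h6]; ring

theorem TΔ_eq (Δ : ℕ) (h : 3 ≤ Δ) :
    TΔ Δ = (Δ:ℝ) * ((Δ:ℝ)-1)^(Δ-1) / (((Δ:ℝ)-2)^Δ + ((Δ:ℝ)-1)^(Δ-1)) := by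
  have hN : (3:ℝ) ≤ (Δ:ℝ) := by exact_mod_cast h
  have hb : (0:ℝ) < ((Δ:ℝ)-2)^Δ := pow_pos (by linarith) Δ
  have hc : (0:ℝ) < ((Δ:ℝ)-1)^(Δ-1) := pow_pos (by linarith) _
  have hbc : ((Δ:ℝ)-2)^Δ + ((Δ:ℝ)-1)^(Δ-1) ≠ 0 := by positivity
  have hone1 : 1 + lambdaC Δ ≠ 0 := by
    have : 0 < lambdaC Δ := div_pos hc hb
    positivity
  unfold TΔ lambdaC
  unfold lambdaC at hone1
  field_simp

theorem T_step (Δ : ℕ) (h : 3 ≤ Δ) : TΔ Δ ≤ TΔ (Δ+1) := by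
  rcases eq_or_lt_of_le h with h3 | h4
  · rw [← h3]; norm_num [TΔ, lambdaC]
  · have h4 : 4 ≤ Δ := h4
    have hN : (4:ℝ) ≤ (Δ:ℝ) := by exact_mod_cast h4
    rw [TΔ_eq Δ h, TΔ_eq (Δ+1) (by omega)]
    have hb : (0:ℝ) < ((Δ:ℝ)-2)^Δ := pow_pos (by linarith) Δ
    have hc : (0:ℝ) < ((Δ:ℝ)-1)^(Δ-1) := pow_pos (by linarith) _
    have hcast : (((Δ+1:ℕ)):ℝ) = (Δ:ℝ)+1 := by push_cast; ring
    rw [hcast]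
    have he : (Δ+1) - 1 = Δ := by omega
    rw [he]
    have h1 : ((Δ:ℝ)+1-1) = (Δ:ℝ) := by ring
    have h2 : ((Δ:ℝ)+1-2) = (Δ:ℝ)-1 := by ring
    rw [h1, h2]
    have hb' : (0:ℝ) < ((Δ:ℝ)-1)^(Δ+1) := pow_pos (by linarith) _
    have hc' : (0:ℝ) < (Δ:ℝ)^Δ := pow_pos (by linarith) _
    rw [div_le_div_iff₀ (by linarith) (by linarith)]
    have key := key_ineq Δ h4
    have hsplit : ((Δ:ℝ)-1)^(Δ-1) * ((Δ:ℝ)-1)^(Δ+1) = (((Δ:ℝ)-1)^2)^Δ := by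
      rw [← pow_add, ← pow_mul]
      congr 1
      omega
    have hmp : ((Δ:ℝ)*((Δ:ℝ)-2))^Δ = (Δ:ℝ)^Δ * ((Δ:ℝ)-2)^Δ := mul_pow _ _ _
    nlinarith [key, hsplit, hmp, mul_pos hc' hc]

set_option maxHeartbeats 1600000 in
theorem T_le_e (Δ : ℕ) (h : 3 ≤ Δ) : TΔ Δ ≤ Real.exp 1 := by
  have he9 := Real.exp_one_gt_d9
  by_cases h8 : Δ ≤ 7
  · interval_cases Δ <;> (norm_num [TΔ, lambdaC]; nlinarith [he9])
  · have h8' : 8 ≤ Δ := by omega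
    have hN : (8:ℝ) ≤ (Δ:ℝ) := by exact_mod_cast h8'
    set N : ℝ := (Δ:ℝ) with hNdef
    have hN2 : (0:ℝ) < N - 2 := by linarith
    obtain ⟨t, htdef⟩ : ∃ t : ℝ, t = (N-2)⁻¹ := ⟨_, rfl⟩
    have ht : 0 < t := htdef ▸ inv_pos.2 hN2
    have htN : t * (N-2) = 1 := htdef ▸ inv_mul_cancel₀ hN2.ne'
    have ht6 : t ≤ 1/6 := by
      rw [htdef, inv_eq_one_div, div_le_div_iff₀ hN2 (by norm_num)]; linarith
    have hNt : N * t = 1 + 2*t := by linear_combination htN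
    have hNt2 : N * t^2 = t + 2*t^2 := by linear_combination t * htN
    rw [TΔ_eq Δ h]
    have hb : (0:ℝ) < (N-2)^Δ := pow_pos hN2 Δ
    have hc : (0:ℝ) < (N-1)^(Δ-1) := pow_pos (by linarith) _
    rw [div_le_iff₀ (by linarith)]
    obtain ⟨E, hEdef⟩ : ∃ E : ℝ, E = (1+t)^(Δ-1) := ⟨_, rfl⟩
    have hE0 : (0:ℝ) ≤ E := by rw [hEdef]; positivity
    have hD : (0:ℝ) < (N-2)^(Δ-1) := pow_pos hN2 _
    have hc_eq : (N-1)^(Δ-1) = (N-2)^(Δ-1) * E := by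
      rw [hEdef, ← mul_pow]
      congr 1
      linear_combination (-1 : ℝ) * htN
    have hb_eq : (N-2)^Δ = (N-2)^(Δ-1) * (N-2) := by
      conv_lhs => rw [show Δ = (Δ-1)+1 by omega]
      rw [pow_succ]
    -- the core bound (N - e) * E ≤ e * (N-2)
    obtain ⟨v, hvdef⟩ : ∃ v : ℝ, v = t - t^2/2 + 2*t^3 := ⟨_, rfl⟩
    have ht3 : (0:ℝ) ≤ t^3 := by positivity
    have ht4 : (0:ℝ) ≤ t^4 := by positivity
    have hvlb0 : (0:ℝ) ≤ t - t^2/2 := by nlinarith [mul_nonneg ht.le (by linarith : (0:ℝ) ≤ 2 - t)]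
    have hv0 : 0 ≤ v := by rw [hvdef]; linarith
    have h1t : 1 + t ≤ Real.exp v := by
      have hq := Real.quadratic_le_exp_of_nonneg hv0
      have hvlb : t - t^2/2 ≤ v := by rw [hvdef]; linarith
      have hsq : (t - t^2/2)^2 ≤ v^2 := pow_le_pow_left₀ hvlb0 hvlb 2
      have : t ≤ v + v^2/2 := by nlinarith [hsq, ht3, ht4, hvdef]
      nlinarith [hq]
    have hcast2 : ((Δ-2 : ℕ):ℝ) = N - 2 := by
      rw [hNdef, Nat.cast_sub (by omega)]; norm_num
    have hE2 : (1+t)^(Δ-2) ≤ Real.exp 1 * Real.exp (-(t/2) + 2*t^2) := by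
      calc (1+t)^(Δ-2) ≤ (Real.exp v)^(Δ-2) := pow_le_pow_left₀ (by linarith) h1t _
        _ = Real.exp (((Δ-2:ℕ):ℝ) * v) := (Real.exp_nat_mul _ _).symm
        _ = Real.exp (1 + (-(t/2) + 2*t^2)) := by
            rw [hcast2]
            congr 1
            linear_combination (1 - t/2 + 2*t^2) * htN + (N-2) * hvdef
        _ = Real.exp 1 * Real.exp (-(t/2) + 2*t^2) := Real.exp_add _ _
    have h1u : (0:ℝ) < 1 + t/2 - 2*t^2 := by nlinarith [ht.le]
    have hu : Real.exp (-(t/2) + 2*t^2) * (1 + t/2 - 2*t^2) ≤ 1 := by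
      have h1 : 1 + t/2 - 2*t^2 ≤ Real.exp (-(-(t/2) + 2*t^2)) := by
        have := Real.add_one_le_exp (-(-(t/2) + 2*t^2)); linarith
      calc Real.exp (-(t/2) + 2*t^2) * (1 + t/2 - 2*t^2)
          ≤ Real.exp (-(t/2) + 2*t^2) * Real.exp (-(-(t/2) + 2*t^2)) :=
            mul_le_mul_of_nonneg_left h1 (Real.exp_pos _).le
        _ = 1 := by
            rw [← Real.exp_add, show (-(t/2) + 2*t^2) + -(-(t/2) + 2*t^2) = 0 by ring, Real.exp_zero]
    have hEb : E * (1 + t/2 - 2*t^2) ≤ Real.exp 1 * (1+t) := by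
      have hsp : E = (1+t)^(Δ-2) * (1+t) := by
        rw [hEdef]
        conv_lhs => rw [show Δ - 1 = (Δ-2)+1 by omega]
        rw [pow_succ]
      rw [hsp]
      have step1 : (1+t)^(Δ-2) * (1+t) * (1 + t/2 - 2*t^2)
          ≤ (Real.exp 1 * Real.exp (-(t/2) + 2*t^2)) * (1+t) * (1 + t/2 - 2*t^2) := by
        apply mul_le_mul_of_nonneg_right _ h1u.le
        exact mul_le_mul_of_nonneg_right hE2 (by linarith)
      calc (1+t)^(Δ-2) * (1+t) * (1 + t/2 - 2*t^2)
          ≤ (Real.exp 1 * Real.exp (-(t/2) + 2*t^2)) * (1+t) * (1 + t/2 - 2*t^2) := step1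
        _ = Real.exp 1 * (1+t) * (Real.exp (-(t/2) + 2*t^2) * (1 + t/2 - 2*t^2)) := by ring
        _ ≤ Real.exp 1 * (1+t) * 1 := by
            apply mul_le_mul_of_nonneg_left hu
            positivity
        _ = Real.exp 1 * (1+t) := by ring
    have hNe : 0 < N - Real.exp 1 := by nlinarith [Real.exp_one_lt_d9]
    have hpoly2 : (N - Real.exp 1) * (1+t) ≤ (N-2) * (1 + t/2 - 2*t^2) := by
      nlinarith [mul_nonneg (by linarith [he9] : (0:ℝ) ≤ Real.exp 1 - 2.7182818283) ht.le, hNt, hNt2, ht.le, ht6]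
    have hcore : (N - Real.exp 1) * E ≤ Real.exp 1 * (N-2) := by
      have hh1 : (N - Real.exp 1) * E * (1 + t/2 - 2*t^2) ≤ (N - Real.exp 1) * (Real.exp 1 * (1+t)) := by
        calc (N - Real.exp 1) * E * (1 + t/2 - 2*t^2) = (N - Real.exp 1) * (E * (1 + t/2 - 2*t^2)) := by ring
          _ ≤ (N - Real.exp 1) * (Real.exp 1 * (1+t)) := mul_le_mul_of_nonneg_left hEb hNe.le
      have hh2 : (N - Real.exp 1) * (Real.exp 1 * (1+t)) ≤ Real.exp 1 * (N-2) * (1 + t/2 - 2*t^2) := by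
        have := mul_le_mul_of_nonneg_left hpoly2 (Real.exp_pos 1).le
        nlinarith [this]
      have hh3 : (N - Real.exp 1) * E * (1 + t/2 - 2*t^2) ≤ Real.exp 1 * (N-2) * (1 + t/2 - 2*t^2) :=
        hh1.trans hh2
      exact le_of_mul_le_mul_right hh3 h1u
    rw [hc_eq, hb_eq]
    nlinarith [mul_le_mul_of_nonneg_left hcore hD.le]

/-- `T(Δ) = Δλ_c(Δ)/(1+λ_c(Δ))` is increasing in `Δ ≥ 3` and bounded by `e`;
in particular `Δλ/(1+λ) ≤ e` whenever `0 < λ ≤ λ_c(Δ)`. -/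
theorem T_monotone_and_le_e :
    (∀ Δ₁ Δ₂ : ℕ, 3 ≤ Δ₁ → Δ₁ ≤ Δ₂ → TΔ Δ₁ ≤ TΔ Δ₂) ∧
    (∀ Δ : ℕ, 3 ≤ Δ → TΔ Δ ≤ Real.exp 1) ∧
    (∀ (Δ : ℕ) (lam : ℝ), 3 ≤ Δ → 0 < lam → lam ≤ lambdaC Δ →
      (Δ : ℝ) * lam / (1 + lam) ≤ Real.exp 1) := by
  have hmono : ∀ Δ₁ Δ₂ : ℕ, 3 ≤ Δ₁ → Δ₁ ≤ Δ₂ → TΔ Δ₁ ≤ TΔ Δ₂ := by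
    intro Δ₁ Δ₂ h3 h12
    induction Δ₂, h12 using Nat.le_induction with
    | base => exact le_refl _
    | succ n hn ih => exact ih.trans (T_step n (le_trans h3 hn))
  refine ⟨hmono, T_le_e, ?_⟩
  intro Δ lam h3 hlam hlamc
  have hN : (3:ℝ) ≤ (Δ:ℝ) := by exact_mod_cast h3
  have hb : (0:ℝ) < ((Δ:ℝ)-2)^Δ := pow_pos (by linarith) Δ
  have hc : (0:ℝ) < ((Δ:ℝ)-1)^(Δ-1) := pow_pos (by linarith) _
  have hlc : 0 < lambdaC Δ := div_pos hc hb
  have hstep : (Δ:ℝ) * lam / (1 + lam) ≤ TΔ Δ := by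
    unfold TΔ
    rw [div_le_div_iff₀ (by linarith) (by linarith)]
    nlinarith [mul_nonneg (Nat.cast_nonneg (α := ℝ) Δ) (mul_pos hlam hlc).le]
  exact hstep.trans (T_le_e Δ h3)
end
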